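/- With B(r) = (r−1)! + 1 (Brauer's bound) and FW as defined, lim_{r→∞} B(r)/FW(r) = ∞. More precisely, for every d there exists φ(d) such that B(r)/FW(r) ≥ d! for all r ≥ φ(d). -/

import Mathlib

/-- The sequence `ψ(d,k)_i` of Wolfson: `ψ(d,k)_0 = k`,
`ψ(d,k)_{i+1} = ⌈ψ(d,k)_i + C(ψ(d,k)_i + d − i, ψ(d,k)_i)/(ψ(d,k)_i + 1)⌉` for `0 ≤ i < d−2`,
and `ψ(d,k)_{d−1} = 2ψ(d,k)_{d−2} + 1` (the ceiling is implemented via rounded-up natural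
division `⌈a/b⌉ = (a + b − 1)/b`). -/
def psi (d k : ℕ) : ℕ → ℕ
  | 0 => k
  | i + 1 =>
    if i + 1 = d - 1 then 2 * psi d k i + 1
    else psi d k i + (Nat.choose (psi d k i + (d - i)) (psi d k i) + psi d k i) / (psi d k i + 1)

/-- `dim M_{3,N} = max{0, C(N+3,3) − (N+1)²}`, the dimension of the moduli space of smooth
cubic hypersurfaces in `P^N` (natural-number subtraction implements the truncation at 0). -/
def dimM (N : ℕ) : ℕ := Nat.choose (N + 3) 3 - (N + 1) ^ 2

/-- `Φ(d,k) = max{(d+k)!/d! + 1, dim M_{3,ψ(d,k)_{d−2}} + d + k + 1}`. -/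
def Phi (d k : ℕ) : ℕ :=
  max ((d + k).factorial / d.factorial + 1) (dimM (psi d k (d - 2)) + d + k + 1)

/-- Wolfson's bound function `FW`: `FW(r) = r + 1` for `r ≤ 3` and
`FW(r) = 2⌊(min_{d+k+1=r, d≥2, k≥1} Φ(d,k))/2⌋ + 1` for `r ≥ 4`. -/
noncomputable def FW (r : ℕ) : ℕ :=
  if r ≤ 3 then r + 1
  else 2 * (sInf {m | ∃ d k : ℕ, 2 ≤ d ∧ 1 ≤ k ∧ d + k + 1 = r ∧ m = Phi d k} / 2) + 1


/-- With `B(r) = (r-1)! + 1` (Brauer's bound), `lim_{r → ∞} B(r)/FW(r) = ∞`; more precisely,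
for every `d` there exists `phi(d)` such that `B(r)/FW(r) >= d!` for all `r >= phi(d)`. -/
private lemma mul_pow_le {B c : ℕ} (e : ℕ) (hc : c ≤ B) : c * B ^ e ≤ B ^ (e + 1) := by
  rw [pow_succ, Nat.mul_comm]
  exact Nat.mul_le_mul_left _ hc

private lemma psi_poly_bound (D : ℕ) (hD : 2 ≤ D) (i : ℕ) :
    ∃ e : ℕ, 1 ≤ e ∧ ∀ k : ℕ, psi D k i ≤ (k + D + 2) ^ e := by
  induction i with
  | zero =>
    refine ⟨1, le_refl _, fun k => ?_⟩
    simp only [psi, pow_one]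
    omega
  | succ i ih =>
    obtain ⟨e, he, hb⟩ := ih
    refine ⟨(e + 1) * D + 1, by omega, fun k => ?_⟩
    have hp := hb k
    have hone : 1 ≤ (k + D + 2) ^ e := Nat.one_le_pow _ _ (by omega)
    have hDB : D ≤ (k + D + 2) ^ e :=
      le_trans (by omega : D ≤ k + D + 2) (Nat.le_self_pow (by omega) _)
    have h2Be : 2 * (k + D + 2) ^ e ≤ (k + D + 2) ^ (e + 1) := mul_pow_le e (by omega)
    have h3Be : 3 * (k + D + 2) ^ e ≤ (k + D + 2) ^ (e + 1) := mul_pow_le e (by omega)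
    have h2l : 2 * (k + D + 2) ^ ((e + 1) * D) ≤ (k + D + 2) ^ ((e + 1) * D + 1) :=
      mul_pow_le _ (by omega)
    have hee : (k + D + 2) ^ (e + 1) ≤ (k + D + 2) ^ ((e + 1) * D) :=
      Nat.pow_le_pow_right (by omega) (by nlinarith)
    simp only [psi]
    set p := psi D k i with hpdef
    have hchoose : Nat.choose (p + (D - i)) p ≤ (k + D + 2) ^ ((e + 1) * D) := by
      calc Nat.choose (p + (D - i)) p = Nat.choose (p + (D - i)) (D - i) := Nat.choose_symm_add
        _ ≤ (p + (D - i)) ^ (D - i) := Nat.choose_le_pow _ _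
        _ ≤ ((k + D + 2) ^ (e + 1)) ^ (D - i) := by
            apply Nat.pow_le_pow_left
            have hDi : D - i ≤ D := Nat.sub_le _ _
            omega
        _ = (k + D + 2) ^ ((e + 1) * (D - i)) := (pow_mul _ (e + 1) (D - i)).symm
        _ ≤ (k + D + 2) ^ ((e + 1) * D) :=
            Nat.pow_le_pow_right (by omega) (Nat.mul_le_mul_left _ (Nat.sub_le _ _))
    split
    · omega
    · have hdiv : (Nat.choose (p + (D - i)) p + p) / (p + 1) ≤ Nat.choose (p + (D - i)) p + p :=
        Nat.div_le_self _ _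
      omega

private lemma fact_beats_pow (m k : ℕ) (h : 4 ^ m + m ≤ k) : (2 * k) ^ m ≤ k.factorial := by
  have hm4 : m ≤ 4 ^ m := (Nat.lt_two_pow_self (n := m)).le.trans (Nat.pow_le_pow_left (by norm_num) m)
  have h1 : 1 ≤ 4 ^ m := Nat.one_le_pow _ _ (by norm_num)
  calc (2 * k) ^ m ≤ (4 * (k - m)) ^ m := Nat.pow_le_pow_left (by omega) m
    _ = 4 ^ m * (k - m) ^ m := by rw [mul_pow]
    _ ≤ (k - m) * (k - m) ^ m := Nat.mul_le_mul_right _ (by omega)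
    _ = (k - m) ^ (m + 1) := (pow_succ' _ _).symm
    _ = (k + 1 - (m + 1)) ^ (m + 1) := by congr 1; omega
    _ ≤ k.descFactorial (m + 1) := Nat.pow_sub_le_descFactorial k (m + 1)
    _ ≤ k.factorial := by
        rw [Nat.descFactorial_eq_div (by omega)]
        exact Nat.div_le_self _ _

private lemma FW_le_bound (d : ℕ) : ∃ φ : ℕ, ∀ r : ℕ, φ ≤ r →
    FW r ≤ (r - 1).factorial / (d + 2).factorial + 2 := by
  obtain ⟨e, he, hψ⟩ := psi_poly_bound (d + 2) (by omega) (d + 2 - 2)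
  refine ⟨4 ^ (3 * e + 3) + (3 * e + 3) + 2 * d + 14, fun r hr => ?_⟩
  set D := d + 2 with hDdef
  set E := 3 * e + 3 with hEdef
  set k := r - D - 1 with hkdef
  have hE1 : 1 ≤ 4 ^ E := Nat.one_le_pow _ _ (by norm_num)
  have hk1 : 1 ≤ k := by omega
  have hkD : D + 2 ≤ k := by omega
  have hkE : 4 ^ E + E ≤ k := by omega
  have hrk : D + k + 1 = r := by omega
  set B := k + D + 2 with hBdef
  have hB4 : 4 ≤ B := by omega
  have hNb : psi D k (D - 2) ≤ B ^ e := hψ k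
  have hBe3 : 3 ≤ B ^ e := le_trans (by omega) (Nat.le_self_pow (by omega) B)
  have hdimM : dimM (psi D k (D - 2)) ≤ (B ^ e + 3) ^ 3 := by
    calc dimM (psi D k (D - 2)) ≤ Nat.choose (psi D k (D - 2) + 3) 3 := Nat.sub_le _ _
      _ ≤ (psi D k (D - 2) + 3) ^ 3 := Nat.choose_le_pow _ _
      _ ≤ (B ^ e + 3) ^ 3 := Nat.pow_le_pow_left (by omega) _
  have hy1 : 1 ≤ B ^ (3 * e) := Nat.one_le_pow _ _ (by omega)
  have hcube : (B ^ e + 3) ^ 3 ≤ 8 * B ^ (3 * e) := by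
    have h1 : (B ^ e + 3) ^ 3 ≤ (2 * B ^ e) ^ 3 := Nat.pow_le_pow_left (by omega) _
    have h2 : (2 * B ^ e) ^ 3 = 8 * B ^ (3 * e) := by
      rw [mul_pow, ← pow_mul, mul_comm e 3]
      norm_num
    omega
  have hsec : dimM (psi D k (D - 2)) + D + k + 1 ≤ B ^ E := by
    have hxB : B ≤ B ^ (3 * e) * B := Nat.le_mul_of_pos_left B (by omega)
    have hx : B ^ (3 * e) ≤ B ^ (3 * e) * B := Nat.le_mul_of_pos_right _ (by omega)
    have h9 : (9 : ℕ) ≤ B * B := le_trans (by norm_num) (Nat.mul_le_mul hB4 hB4)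
    have h3 : 9 * (B ^ (3 * e) * B) ≤ (B * B) * (B ^ (3 * e) * B) :=
      Nat.mul_le_mul_right _ h9
    have h4 : (B * B) * (B ^ (3 * e) * B) = B ^ E := by
      rw [hEdef]
      ring
    have hDk : D + k + 1 ≤ B := by omega
    omega
  have hfac1 : B ^ E ≤ k.factorial := by
    calc B ^ E ≤ (2 * k) ^ E := Nat.pow_le_pow_left (by omega) _
      _ ≤ k.factorial := fact_beats_pow E k hkE
  have hfac2 : k.factorial ≤ (D + k).factorial / D.factorial := by
    rw [Nat.le_div_iff_mul_le (Nat.factorial_pos D)]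
    have : k.factorial * D.factorial ∣ (D + k).factorial := by
      rw [Nat.add_comm]
      exact Nat.factorial_mul_factorial_dvd_factorial_add k D
    exact Nat.le_of_dvd (Nat.factorial_pos _) this
  have hPhi : Phi D k ≤ (D + k).factorial / D.factorial + 1 := by
    unfold Phi
    apply max_le (le_refl _)
    omega
  unfold FW
  rw [if_neg (by omega : ¬ r ≤ 3)]
  have hmem : Phi D k ∈ {m | ∃ d' k' : ℕ, 2 ≤ d' ∧ 1 ≤ k' ∧ d' + k' + 1 = r ∧ m = Phi d' k'} :=
    ⟨D, k, by omega, hk1, hrk, rfl⟩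
  have hinf := Nat.sInf_le hmem
  have hhalf := Nat.div_mul_le_self
    (sInf {m | ∃ d' k' : ℕ, 2 ≤ d' ∧ 1 ≤ k' ∧ d' + k' + 1 = r ∧ m = Phi d' k'}) 2
  have hDk1 : D + k = r - 1 := by omega
  rw [hDk1] at hPhi
  omega

private lemma main_bound (d : ℕ) : ∃ φ : ℕ, ∀ r : ℕ, φ ≤ r →
    d.factorial * FW r ≤ (r - 1).factorial + 1 := by
  obtain ⟨φ₀, h⟩ := FW_le_bound d
  refine ⟨max φ₀ (d + 7), fun r hr => ?_⟩
  have h1 := h r (le_trans (le_max_left _ _) hr)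
  have hr7 : d + 7 ≤ r := le_trans (le_max_right _ _) hr
  obtain ⟨c, hc⟩ := Nat.factorial_dvd_factorial (show d + 2 ≤ r - 1 by omega)
  have hq : (r - 1).factorial / (d + 2).factorial = c := by
    rw [hc]
    exact Nat.mul_div_cancel_left _ (Nat.factorial_pos _)
  rw [hq] at h1
  have hfd : (d + 2).factorial = (d + 2) * ((d + 1) * d.factorial) := by
    rw [Nat.factorial_succ, Nat.factorial_succ]
  have hkey : 2 * d.factorial ≤ (d + 2).factorial := by
    rw [hfd]
    exact Nat.mul_le_mul (by omega) (Nat.le_mul_of_pos_left _ (by omega))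
  have h2 : 2 * (d.factorial * c) ≤ (r - 1).factorial := by
    calc 2 * (d.factorial * c) = (2 * d.factorial) * c := by ring
      _ ≤ (d + 2).factorial * c := Nat.mul_le_mul_right _ hkey
      _ = (r - 1).factorial := hc.symm
  have h3 : 4 * d.factorial ≤ (r - 1).factorial := by
    have h4 : 4 * d.factorial ≤ 2 * (d + 2).factorial := by omega
    have h5 : 2 * (d + 2).factorial ≤ (d + 3).factorial := by
      rw [Nat.factorial_succ (d + 2)]
      exact Nat.mul_le_mul_right _ (by omega)
    exact le_trans h4 (le_trans h5 (Nat.factorial_le (by omega)))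
  have h5 : d.factorial * FW r ≤ d.factorial * c + 2 * d.factorial := by
    calc d.factorial * FW r ≤ d.factorial * (c + 2) := Nat.mul_le_mul_left _ h1
      _ = d.factorial * c + 2 * d.factorial := by ring
  omega

theorem brauer_over_FW_tendsto_atTop :
    (∀ d : ℕ, ∃ φ : ℕ, ∀ r : ℕ, φ ≤ r →
        (Nat.factorial d : ℝ) ≤ ((r - 1).factorial + 1 : ℝ) / (FW r : ℝ)) ∧
      Filter.Tendsto (fun r : ℕ => ((r - 1).factorial + 1 : ℝ) / (FW r : ℝ))
        Filter.atTop Filter.atTop := by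
  have main : ∀ d : ℕ, ∃ φ : ℕ, ∀ r : ℕ, φ ≤ r →
      (Nat.factorial d : ℝ) ≤ ((r - 1).factorial + 1 : ℝ) / (FW r : ℝ) := by
    intro d
    obtain ⟨φ, h⟩ := main_bound d
    refine ⟨φ, fun r hr => ?_⟩
    have hFW : 0 < FW r := by
      unfold FW
      split <;> omega
    rw [le_div_iff₀ (by exact_mod_cast hFW)]
    exact_mod_cast h r hr
  refine ⟨main, ?_⟩
  rw [Filter.tendsto_atTop]
  intro b
  obtain ⟨n, hn⟩ := exists_nat_ge b
  obtain ⟨φ, h⟩ := main n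
  filter_upwards [Filter.eventually_ge_atTop φ] with r hr
  calc b ≤ (n : ℝ) := hn
    _ ≤ (n.factorial : ℝ) := by exact_mod_cast Nat.self_le_factorial n
    _ ≤ _ := h r hr
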